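/- Let f : Ω → 𝕆 be a slice regular function on a symmetric slice domain Ω ⊆ 𝕆. If there exists I ∈ 𝕊 such that the restriction of |f| to Ω_I attains a local maximum at some point of Ω_I, then f is constant on Ω. -/

import Mathlib

noncomputable section

open Quaternion

/-- The octonions, realized via the Cayley–Dickson construction over the quaternions. -/
abbrev Octo := ℍ[ℝ] × ℍ[ℝ]

namespace Octo

/-- Octonion multiplication (Cayley–Dickson): (z₁,z₂)(w₁,w₂) = (z₁w₁ - w̄₂z₂, z₂w̄₁ + w₂z₁). -/
def mul' (z w : Octo) : Octo :=
  (z.1 * w.1 - star w.2 * z.2, z.2 * star w.1 + w.2 * z.1)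

/-- Octonionic conjugation. -/
def conj' (x : Octo) : Octo := (star x.1, -x.2)

/-- The multiplicative unit of the octonions. -/
def one' : Octo := (1, 0)

/-- The embedding of the reals into the octonions. -/
def emb (x : ℝ) : Octo := (algebraMap ℝ ℍ[ℝ] x, 0)

/-- The real part of an octonion. -/
def re' (x : Octo) : ℝ := x.1.re

/-- The imaginary part of an octonion. -/
def im' (x : Octo) : Octo := x - emb (re' x)

/-- The standard Euclidean inner product on 𝕆 ≅ ℝ⁸. -/
def inner' (x y : Octo) : ℝ := (inner ℝ x.1 y.1 : ℝ) + (inner ℝ x.2 y.2 : ℝ)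

/-- The Euclidean norm on the octonions. -/
def norm' (x : Octo) : ℝ := Real.sqrt (inner' x x)

/-- The multiplicative inverse of a nonzero octonion. -/
def inv' (x : Octo) : Octo := (inner' x x)⁻¹ • conj' x

/-- The associator [u,v,w] = (uv)w - u(vw). -/
def assoc' (u v w : Octo) : Octo := mul' (mul' u v) w - mul' u (mul' v w)

/-- n-th power of an octonion. -/
def pow' (x : Octo) : ℕ → Octo
  | 0 => one'
  | n + 1 => mul' x (pow' x n)

/-- A purely imaginary unit octonion: I ∈ 𝕊 iff I² = -1. -/
def IsImUnit (I : Octo) : Prop := mul' I I = - one'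

/-- The point x + yI on the slice ℂ_I. -/
def pt (I : Octo) (p : ℝ × ℝ) : Octo := emb p.1 + p.2 • I

/-- The slice ℂ_I = ℝ ⊕ Iℝ. -/
def sliceSet (I : Octo) : Set Octo := {z | ∃ p : ℝ × ℝ, z = pt I p}

/-- e^{θI} = cos θ + (sin θ) I. -/
def expI (θ : ℝ) (I : Octo) : Octo := emb (Real.cos θ) + Real.sin θ • I

/-- Slice regularity: on every slice ℂ_I the function is holomorphic, i.e. real
differentiable with ∂f/∂x + I ∂f/∂y = 0. -/
def SliceRegular (Ω : Set Octo) (f : Octo → Octo) : Prop :=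
  ∀ I, IsImUnit I → ∀ p : ℝ × ℝ, pt I p ∈ Ω →
    ∃ fx fy : Octo,
      HasFDerivAt (fun q : ℝ × ℝ => f (pt I q))
        ((ContinuousLinearMap.fst ℝ ℝ ℝ).smulRight fx
          + (ContinuousLinearMap.snd ℝ ℝ ℝ).smulRight fy) p
      ∧ fx + mul' I fy = 0

/-- Symmetric slice domain: open, connected, meeting the real axis, with each slice a
domain, and axially symmetric. -/
def SymSliceDomain (Ω : Set Octo) : Prop :=
  IsOpen Ω ∧ IsConnected Ω ∧ (∃ x : ℝ, emb x ∈ Ω) ∧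
  (∀ I, IsImUnit I → IsConnected {p : ℝ × ℝ | pt I p ∈ Ω}) ∧
  (∀ I J, IsImUnit I → IsImUnit J → ∀ p : ℝ × ℝ, pt I p ∈ Ω → pt J p ∈ Ω)

/-- The open unit ball 𝔹 of the octonions. -/
def ball1 : Set Octo := {z | norm' z < 1}

end Octo

-- AUX START
namespace OctoMax

open Octo Quaternion

/-! ### Quaternion-level algebra -/

lemma comp1 (a b z w : ℍ) (h1 : a * a - star b * b = -1) (h2 : b * star a + b * a = 0) :
    a * (a * z - star w * b) - star (b * star z + w * a) * b = -z := by
  have hb0 : b * ((2 * a.re : ℝ) : ℍ) = 0 := by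
    rw [← Quaternion.self_add_star', mul_add, add_comm] at *
    linear_combination (norm := noncomm_ring) h2
  have aux1 : z * (star b * b) = (star b * b) * z := by
    rw [Quaternion.star_mul_self, Quaternion.coe_commutes]
  have aux2 : a * (star w * b) + star a * (star w * b) = 0 := by
    calc a * (star w * b) + star a * (star w * b) = (a + star a) * (star w * b) := by noncomm_ring
      _ = star w * b * ((2 * a.re : ℝ) : ℍ) := by rw [Quaternion.self_add_star',
            Quaternion.coe_commutes]
      _ = star w * (b * ((2 * a.re : ℝ) : ℍ)) := by rw [mul_assoc]
      _ = 0 := by rw [hb0, mul_zero]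
  simp only [star_add, star_mul, star_star]
  linear_combination (norm := noncomm_ring) h1 * z - aux1 - aux2

lemma comp2 (a b z w : ℍ) (h1 : a * a - star b * b = -1) (h2 : b * star a + b * a = 0) :
    b * star (a * z - star w * b) + (b * star z + w * a) * a = -w := by
  have hb0 : b * ((2 * a.re : ℝ) : ℍ) = 0 := by
    rw [← Quaternion.self_add_star', mul_add, add_comm] at *
    linear_combination (norm := noncomm_ring) h2
  have aux1 : b * (star b * w) = w * (star b * b) := by
    rw [Quaternion.star_mul_self, ← mul_assoc, Quaternion.self_mul_star,
      Quaternion.coe_commutes]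
  have aux2 : b * (star z * star a) + b * (star z * a) = 0 := by
    calc b * (star z * star a) + b * (star z * a) = b * (star z * (star a + a)) := by noncomm_ring
      _ = b * (star z * ((2 * a.re : ℝ) : ℍ)) := by rw [Quaternion.star_add_self']
      _ = b * (((2 * a.re : ℝ) : ℍ) * star z) := by rw [Quaternion.coe_commutes]
      _ = (b * ((2 * a.re : ℝ) : ℍ)) * star z := by rw [mul_assoc]
      _ = 0 := by rw [hb0, zero_mul]
  simp only [star_sub, star_mul, star_star]
  linear_combination (norm := noncomm_ring) w * h1 - aux1 + aux2

lemma normSq_comp (a b z w : ℍ) :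
    normSq (a * z - star w * b) + normSq (b * star z + w * a)
      = (normSq a + normSq b) * (normSq z + normSq w) := by
  simp only [Quaternion.normSq_def', Quaternion.re_mul, Quaternion.imI_mul, Quaternion.imJ_mul,
    Quaternion.imK_mul, Quaternion.re_sub, Quaternion.imI_sub, Quaternion.imJ_sub,
    Quaternion.imK_sub, Quaternion.re_add, Quaternion.imI_add, Quaternion.imJ_add,
    Quaternion.imK_add, Quaternion.re_star, Quaternion.imI_star, Quaternion.imJ_star,
    Quaternion.imK_star]
  ring

lemma imunit_re_norm (a b : ℍ) (h1 : a * a - star b * b = -1) (h2 : b * star a + b * a = 0) :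
    a.re = 0 ∧ normSq a + normSq b = 1 := by
  have hb0 : (2 * a.re) • b = 0 := by
    rw [← Quaternion.mul_coe_eq_smul, ← Quaternion.self_add_star', mul_add, add_comm]
    linear_combination (norm := noncomm_ring) h2
  have hre : (a * a).re - ((normSq b : ℝ)) = -1 := by
    have := congrArg QuaternionAlgebra.re h1
    simpa [Quaternion.star_mul_self] using this
  have hare : a.re = 0 := by
    rcases smul_eq_zero.mp hb0 with h | h
    · rcases mul_eq_zero.mp h with h' | h'
      · norm_num at h'
      · exact h'
    · subst h
      have hI := congrArg QuaternionAlgebra.imI h1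
      have hJ := congrArg QuaternionAlgebra.imJ h1
      have hK := congrArg QuaternionAlgebra.imK h1
      simp [Quaternion.imI_mul, Quaternion.imJ_mul, Quaternion.imK_mul] at hI hJ hK
      simp [Quaternion.re_mul, Quaternion.normSq_def'] at hre
      by_contra hne
      have hi : a.imI = 0 := by
        have : a.re * a.imI = 0 := by linear_combination hI / 2
        exact (mul_eq_zero.mp this).resolve_left hne
      have hj : a.imJ = 0 := by
        have : a.re * a.imJ = 0 := by linear_combination hJ / 2
        exact (mul_eq_zero.mp this).resolve_left hne
      have hk : a.imK = 0 := by
        have : a.re * a.imK = 0 := by linear_combination hK / 2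
        exact (mul_eq_zero.mp this).resolve_left hne
      rw [hi, hj, hk] at hre
      nlinarith [sq_nonneg a.re]
  refine ⟨hare, ?_⟩
  simp [Quaternion.re_mul, Quaternion.normSq_def', hare] at hre ⊢
  linarith

/-! ### Octonion-level lemmas -/

lemma isImUnit_defs {I : Octo} (hI : IsImUnit I) :
    I.1 * I.1 - star I.2 * I.2 = -1 ∧ I.2 * star I.1 + I.2 * I.1 = 0 := by
  have h := hI
  rw [Octo.IsImUnit, Octo.mul', Octo.one', Prod.ext_iff] at h
  simpa using h

lemma mul'_mul'_self {I : Octo} (hI : IsImUnit I) (y : Octo) :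
    mul' I (mul' I y) = -y := by
  obtain ⟨h1, h2⟩ := isImUnit_defs hI
  rw [Octo.mul', Octo.mul', Prod.ext_iff]
  exact ⟨comp1 I.1 I.2 y.1 y.2 h1 h2, comp2 I.1 I.2 y.1 y.2 h1 h2⟩

lemma inner'_self (v : Octo) : inner' v v = normSq v.1 + normSq v.2 := by
  rw [Octo.inner', Quaternion.inner_self, Quaternion.inner_self]

lemma inner'_self_nonneg (v : Octo) : 0 ≤ inner' v v := by
  rw [inner'_self]
  have h1 := Quaternion.normSq_nonneg (a := v.1)
  have h2 := Quaternion.normSq_nonneg (a := v.2)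
  linarith

lemma isImUnit_norm {I : Octo} (hI : IsImUnit I) : inner' I I = 1 := by
  obtain ⟨h1, h2⟩ := isImUnit_defs hI
  rw [inner'_self]
  exact (imunit_re_norm I.1 I.2 h1 h2).2

lemma re'_isImUnit {I : Octo} (hI : IsImUnit I) : re' I = 0 := by
  obtain ⟨h1, h2⟩ := isImUnit_defs hI
  exact (imunit_re_norm I.1 I.2 h1 h2).1

lemma inner'_mul' {I : Octo} (hI : IsImUnit I) (v : Octo) :
    inner' (mul' I v) (mul' I v) = inner' v v := by
  rw [inner'_self, inner'_self, Octo.mul']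
  have := normSq_comp I.1 I.2 v.1 v.2
  have hn := (isImUnit_norm hI)
  rw [inner'_self] at hn
  simp only [] at this ⊢
  rw [this, hn, one_mul]

lemma isImUnit_of {v : Octo} (h0 : re' v = 0) (h1 : inner' v v = 1) : IsImUnit v := by
  have hsa : star v.1 = -v.1 := by
    ext <;> simp [Octo.re'] at h0 ⊢ <;> simp [h0]
  rw [inner'_self] at h1
  rw [Octo.IsImUnit, Octo.mul', Octo.one', Prod.ext_iff]
  have hvv : v.1 * v.1 = -((normSq v.1 : ℝ) : ℍ) := by
    rw [← Quaternion.star_mul_self, hsa]; noncomm_ring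
  constructor
  · rw [hvv, Quaternion.star_mul_self]
    have : ((normSq v.1 + normSq v.2 : ℝ) : ℍ) = ((1:ℝ) : ℍ) := by rw [h1]
    push_cast at this
    simp only [Prod.fst_neg]
    linear_combination (norm := noncomm_ring) -this
  · simp only [hsa, Prod.snd_neg]
    simp [Octo.one']

end OctoMax
-- AUX END

namespace OctoMax
open Octo Quaternion

/-! ### coordinates and the linear embedding -/

def coords (v : Octo) : Fin 8 → ℝ := fun k =>
  match k with
  | 0 => v.1.re | 1 => v.1.imI | 2 => v.1.imJ | 3 => v.1.imK
  | 4 => v.2.re | 5 => v.2.imI | 6 => v.2.imJ | 7 => v.2.imK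

lemma coords_add (v w : Octo) : coords (v + w) = coords v + coords w := by
  funext k
  fin_cases k <;> rfl

lemma coords_smul (r : ℝ) (v : Octo) : coords (r • v) = r • coords v := by
  funext k
  fin_cases k <;> rfl

lemma coords_neg (v : Octo) : coords (-v) = -coords v := by
  funext k
  fin_cases k <;> rfl

lemma coords_inj {v w : Octo} (h : coords v = coords w) : v = w := by
  have h' := fun k => congrFun h k
  have h0 := h' 0; have h1 := h' 1; have h2 := h' 2; have h3 := h' 3
  have h4 := h' 4; have h5 := h' 5; have h6 := h' 6; have h7 := h' 7
  simp only [coords] at h0 h1 h2 h3 h4 h5 h6 h7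
  refine Prod.ext ?_ ?_ <;> ext <;> assumption

lemma sum_coords_sq (v : Octo) : ∑ k : Fin 8, coords v k ^ 2 = inner' v v := by
  rw [inner'_self, Fin.sum_univ_eight]
  simp only [coords, Quaternion.normSq_def']
  ring

lemma mul'_add_right (I v w : Octo) : mul' I (v + w) = mul' I v + mul' I w := by
  simp only [Octo.mul', Prod.fst_add, Prod.snd_add, star_add, Prod.mk_add_mk, Prod.ext_iff]
  constructor <;> noncomm_ring

lemma mul'_smul_right (I : Octo) (r : ℝ) (v : Octo) : mul' I (r • v) = r • mul' I v := by
  simp only [Octo.mul', Prod.smul_fst, Prod.smul_snd, Quaternion.star_smul, Prod.smul_mk,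
    Prod.ext_iff]
  constructor <;>
    simp [smul_mul_assoc, mul_smul_comm, smul_sub, smul_add]

/-- The splitting embedding `v ↦ (φ_k v - i φ_k (I v))_k`. -/
def Lmap (I : Octo) : Octo →ₗ[ℝ] EuclideanSpace ℂ (Fin 8) where
  toFun v := WithLp.toLp 2 (fun k => (coords v k : ℂ) - Complex.I * (coords (mul' I v) k : ℂ))
  map_add' v w := by
    ext k
    simp only [mul'_add_right, coords_add, Pi.add_apply]
    push_cast
    show _ = ((coords v k : ℂ) - Complex.I * (coords (mul' I v) k : ℂ))
      + ((coords w k : ℂ) - Complex.I * (coords (mul' I w) k : ℂ))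
    ring
  map_smul' r v := by
    ext k
    simp only [mul'_smul_right, coords_smul, Pi.smul_apply, smul_eq_mul, RingHom.id_apply]
    show _ = (r : ℂ) • ((coords v k : ℂ) - Complex.I * (coords (mul' I v) k : ℂ))
    push_cast
    simp only [smul_eq_mul]
    ring

lemma Lmap_apply (I v : Octo) (k : Fin 8) :
    Lmap I v k = (coords v k : ℂ) - Complex.I * (coords (mul' I v) k : ℂ) := rfl

lemma Lmap_re (I v : Octo) (k : Fin 8) : (Lmap I v k).re = coords v k := by
  simp [Lmap_apply]

lemma Lmap_inj {I : Octo} {v w : Octo} (h : Lmap I v = Lmap I w) : v = w := by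
  apply coords_inj
  funext k
  have := congrArg Complex.re (congrFun (congrArg WithLp.ofLp h) k)
  simpa [Lmap_re] using this

lemma Lmap_mul' {I : Octo} (hI : IsImUnit I) (v : Octo) :
    Lmap I (mul' I v) = Complex.I • Lmap I v := by
  ext k
  simp only [Lmap_apply, mul'_mul'_self hI, coords_neg, Pi.neg_apply, PiLp.smul_apply,
    smul_eq_mul]
  push_cast
  linear_combination ((coords (mul' I v) k : ℂ)) * Complex.I_sq

lemma norm_Lmap {I : Octo} (hI : IsImUnit I) (v : Octo) :
    ‖Lmap I v‖ = Real.sqrt 2 * norm' v := by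
  rw [EuclideanSpace.norm_eq, Octo.norm', ← Real.sqrt_mul (by norm_num : (0:ℝ) ≤ 2)]
  congr 1
  have : ∀ k : Fin 8, ‖Lmap I v k‖ ^ 2 = coords v k ^ 2 + coords (mul' I v) k ^ 2 := by
    intro k
    rw [Lmap_apply, Complex.sq_norm, Complex.normSq_apply]
    simp
    ring
  calc ∑ k : Fin 8, ‖Lmap I v k‖ ^ 2
      = ∑ k : Fin 8, (coords v k ^ 2 + coords (mul' I v) k ^ 2) := by
        exact Finset.sum_congr rfl fun k _ => this k
    _ = inner' v v + inner' (mul' I v) (mul' I v) := by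
        rw [Finset.sum_add_distrib, sum_coords_sq, sum_coords_sq]
    _ = 2 * inner' v v := by rw [inner'_mul' hI]; ring

end OctoMax

namespace OctoMax
open Octo Quaternion Set Filter Topology

/-! ### small octonion facts -/

lemma re'_smul (r : ℝ) (v : Octo) : re' (r • v) = r * re' v := by
  simp [Octo.re']

lemma re'_emb (t : ℝ) : re' (emb t) = t := by
  simp [Octo.re', Octo.emb, QuaternionAlgebra.algebraMap_eq]

lemma re'_sub (v w : Octo) : re' (v - w) = re' v - re' w := by
  simp [Octo.re']

lemma inner'_smul (r : ℝ) (v : Octo) : inner' (r • v) (r • v) = r ^ 2 * inner' v v := by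
  simp only [Octo.inner', Prod.smul_fst, Prod.smul_snd, real_inner_smul_left,
    real_inner_smul_right]
  ring

lemma norm'_sq (v : Octo) : norm' v ^ 2 = inner' v v := Real.sq_sqrt (inner'_self_nonneg v)

lemma norm'_nonneg (v : Octo) : 0 ≤ norm' v := Real.sqrt_nonneg _

lemma inner'_self_eq_zero {v : Octo} : inner' v v = 0 ↔ v = 0 := by
  rw [inner'_self]
  constructor
  · intro h
    have h1 : normSq v.1 = 0 := by
      have := Quaternion.normSq_nonneg (a := v.1)
      have := Quaternion.normSq_nonneg (a := v.2)
      linarith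
    have h2 : normSq v.2 = 0 := by
      have := Quaternion.normSq_nonneg (a := v.1)
      linarith
    exact Prod.ext (normSq_eq_zero.mp h1) (normSq_eq_zero.mp h2)
  · rintro rfl; simp

lemma norm'_pos {v : Octo} (hv : v ≠ 0) : 0 < norm' v := by
  apply Real.sqrt_pos.mpr
  rcases lt_or_eq_of_le (inner'_self_nonneg v) with h | h
  · exact h
  · exact absurd (inner'_self_eq_zero.mp h.symm) hv

lemma pt_real (K : Octo) (t : ℝ) : pt K (t, 0) = emb t := by
  simp [Octo.pt]

lemma continuous_pt (I : Octo) : Continuous fun p : ℝ × ℝ => pt I p := by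
  have hemb : Continuous emb :=
    Continuous.prodMk (continuous_algebraMap ℝ ℍ[ℝ]) continuous_const
  exact (hemb.comp continuous_fst).add (continuous_snd.smul continuous_const)

/-! ### the complexified picture -/

def LmapC (I : Octo) : Octo →L[ℝ] EuclideanSpace ℂ (Fin 8) :=
  LinearMap.toContinuousLinearMap (Lmap I)

lemma LmapC_apply (I v : Octo) : LmapC I v = Lmap I v := rfl

def gfun (f : Octo → Octo) (K : Octo) (c : ℂ) : EuclideanSpace ℂ (Fin 8) :=
  Lmap K (f (pt K (c.re, c.im)))

def Uset (Ω : Set Octo) (K : Octo) : Set ℂ := {c : ℂ | pt K (c.re, c.im) ∈ Ω}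

lemma continuous_ptC (K : Octo) : Continuous fun c : ℂ => pt K (c.re, c.im) :=
  (continuous_pt K).comp (Complex.continuous_re.prodMk Complex.continuous_im)

lemma isOpen_Uset {Ω : Set Octo} (hΩ : IsOpen Ω) (K : Octo) : IsOpen (Uset Ω K) :=
  hΩ.preimage (continuous_ptC K)

lemma isPreconnected_Uset {Ω : Set Octo} (K : Octo)
    (h : IsConnected {p : ℝ × ℝ | pt K p ∈ Ω}) : IsPreconnected (Uset Ω K) := by
  have himg : Uset Ω K = (fun p : ℝ × ℝ => Complex.equivRealProd.symm p) ''
      {p : ℝ × ℝ | pt K p ∈ Ω} := by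
    ext c
    constructor
    · intro hc
      refine ⟨(c.re, c.im), hc, ?_⟩
      simp [Complex.equivRealProd_symm_apply, Complex.re_add_im]
    · rintro ⟨p, hp, rfl⟩
      show pt K (_, _) ∈ Ω
      simpa [Complex.equivRealProd_symm_apply] using hp
  rw [himg]
  exact (h.image _ (Complex.equivRealProdCLM.symm.continuous.continuousOn)).isPreconnected

lemma mul'_zero_right (K : Octo) : mul' K (0 : Octo) = 0 := by
  simp [Octo.mul']

lemma differentiableAt_gfun {Ω : Set Octo} {f : Octo → Octo} (hf : SliceRegular Ω f)
    {K : Octo} (hK : IsImUnit K) {c : ℂ} (hc : pt K (c.re, c.im) ∈ Ω) :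
    DifferentiableAt ℂ (gfun f K) c := by
  obtain ⟨fx, fy, hF, hCR⟩ := hf K hK (c.re, c.im) hc
  have hfy : fy = mul' K fx := by
    have h := congrArg (mul' K) hCR
    rw [mul'_add_right, mul'_mul'_self hK, mul'_zero_right] at h
    exact (add_neg_eq_zero.mp h).symm
  set D := (ContinuousLinearMap.fst ℝ ℝ ℝ).smulRight fx
    + (ContinuousLinearMap.snd ℝ ℝ ℝ).smulRight fy with hD
  have he : HasFDerivAt (fun z : ℂ => (z.re, z.im))
      (Complex.equivRealProdCLM.toContinuousLinearMap) c :=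
    Complex.equivRealProdCLM.toContinuousLinearMap.hasFDerivAt
  have hcomp : HasFDerivAt (fun z : ℂ => f (pt K (z.re, z.im)))
      (D.comp Complex.equivRealProdCLM.toContinuousLinearMap) c := by
    exact HasFDerivAt.comp c hF he
  have hcomp2 : HasFDerivAt (gfun f K)
      ((LmapC K).comp (D.comp Complex.equivRealProdCLM.toContinuousLinearMap)) c :=
    HasFDerivAt.comp c ((LmapC K).hasFDerivAt) hcomp
  have hsm : ∀ (r : ℝ) (v : EuclideanSpace ℂ (Fin 8)), r • v = (r : ℂ) • v := by
    intro r v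
    rw [← algebraMap_smul ℂ r v, Complex.coe_algebraMap]
  have H : (ContinuousLinearMap.smulRight (1 : ℂ →L[ℂ] ℂ) (Lmap K fx)).restrictScalars ℝ
      = (LmapC K).comp (D.comp Complex.equivRealProdCLM.toContinuousLinearMap) := by
    apply ContinuousLinearMap.ext
    intro z
    show z • Lmap K fx = LmapC K (D (z.re, z.im))
    have hDz : D (z.re, z.im) = z.re • fx + z.im • fy := by
      simp [hD]
    rw [hDz, LmapC_apply, map_add, LinearMap.map_smul, LinearMap.map_smul, hfy,
      Lmap_mul' hK, hsm z.re, hsm z.im, smul_smul, ← add_smul]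
    congr 1
    exact (Complex.re_add_im z).symm
  exact (hasFDerivAt_of_restrictScalars ℝ (hcomp2) H).differentiableAt

lemma norm_gfun {f : Octo → Octo} {K : Octo} (hK : IsImUnit K) (c : ℂ) :
    ‖gfun f K c‖ = Real.sqrt 2 * norm' (f (pt K (c.re, c.im))) :=
  norm_Lmap hK _

end OctoMax


open OctoMax Set Filter Topology in
open Octo in
/-- Maximum principle: if |f| restricted to a slice attains a local maximum, then f
is constant. -/
theorem maximum_principle (Ω : Set Octo) (hΩ : SymSliceDomain Ω)
    (f : Octo → Octo) (hf : SliceRegular Ω f)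
    (I : Octo) (hI : IsImUnit I)
    (z₀ : Octo) (hz₀ : z₀ ∈ Ω ∩ sliceSet I)
    (hmax : IsLocalMaxOn (fun z => norm' (f z)) (Ω ∩ sliceSet I) z₀) :
    ∀ z ∈ Ω, ∀ w ∈ Ω, f z = f w := by
  obtain ⟨hopen, -, ⟨x₀, hx₀⟩, hsliceconn, -⟩ := hΩ
  obtain ⟨hz₀Ω, p₀, hp₀⟩ := hz₀
  set c₀ : ℂ := ⟨p₀.1, p₀.2⟩ with hc₀def
  have hptc₀ : pt I (c₀.re, c₀.im) = z₀ := hp₀.symm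
  have hc₀U : c₀ ∈ Uset Ω I := by
    show pt I (c₀.re, c₀.im) ∈ Ω
    rw [hptc₀]; exact hz₀Ω
  have hdiff : ∀ K : Octo, IsImUnit K → ∀ c ∈ Uset Ω K, DifferentiableAt ℂ (gfun f K) c :=
    fun K hK c hc => differentiableAt_gfun hf hK hc
  have hanal : ∀ K : Octo, IsImUnit K → AnalyticOnNhd ℂ (gfun f K) (Uset Ω K) := by
    intro K hK
    exact DifferentiableOn.analyticOnNhd
      (fun c hc => (hdiff K hK c hc).differentiableWithinAt) (isOpen_Uset hopen K)
  -- local max transfer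
  have htend : Tendsto (fun c : ℂ => pt I (c.re, c.im)) (𝓝 c₀) (𝓝[Ω ∩ sliceSet I] z₀) := by
    rw [tendsto_nhdsWithin_iff]
    constructor
    · have h := (continuous_ptC I).tendsto c₀
      rwa [hptc₀] at h
    · filter_upwards [(isOpen_Uset hopen I).eventually_mem hc₀U] with c hc
      exact ⟨hc, ⟨(c.re, c.im), rfl⟩⟩
  have hgmax : IsLocalMax (fun c => ‖gfun f I c‖) c₀ := by
    have hev := htend.eventually hmax
    filter_upwards [hev] with c hc
    show ‖gfun f I c‖ ≤ ‖gfun f I c₀‖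
    rw [norm_gfun hI, norm_gfun hI, hptc₀]
    exact mul_le_mul_of_nonneg_left hc (Real.sqrt_nonneg 2)
  have hloc : ∀ᶠ y in 𝓝 c₀, gfun f I y = gfun f I c₀ := by
    apply Complex.eventually_eq_of_isLocalMax_norm _ hgmax
    filter_upwards [(isOpen_Uset hopen I).eventually_mem hc₀U] with c hc
    exact hdiff I hI c hc
  have hEqI : EqOn (gfun f I) (fun _ => gfun f I c₀) (Uset Ω I) :=
    (hanal I hI).eqOn_of_preconnected_of_eventuallyEq analyticOnNhd_const
      (isPreconnected_Uset I (hsliceconn I hI)) hc₀U hloc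
  have hfI : ∀ p : ℝ × ℝ, pt I p ∈ Ω → f (pt I p) = f z₀ := by
    intro p hp
    have hpU : (⟨p.1, p.2⟩ : ℂ) ∈ Uset Ω I := hp
    have h := hEqI hpU
    have h2 : gfun f I c₀ = Lmap I (f z₀) := by
      show Lmap I (f (pt I (c₀.re, c₀.im))) = _
      rw [hptc₀]
    rw [h2] at h
    exact Lmap_inj h
  have hreal : ∀ t : ℝ, emb t ∈ Ω → f (emb t) = f z₀ := by
    intro t ht
    have h := hfI (t, 0) (by rw [pt_real]; exact ht)
    rwa [pt_real] at h
  have hembc : Continuous emb :=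
    Continuous.prodMk (continuous_algebraMap ℝ ℍ[ℝ]) continuous_const
  have hfK : ∀ K : Octo, IsImUnit K → ∀ p : ℝ × ℝ, pt K p ∈ Ω → f (pt K p) = f z₀ := by
    intro K hK p hp
    have hx₀U : ((x₀ : ℝ) : ℂ) ∈ Uset Ω K := by
      show pt K (((x₀ : ℝ) : ℂ).re, ((x₀ : ℝ) : ℂ).im) ∈ Ω
      simp only [Complex.ofReal_re, Complex.ofReal_im]
      rw [pt_real]; exact hx₀
    have htR : Tendsto (fun t : ℝ => (t : ℂ)) (𝓝[≠] x₀) (𝓝[≠] ((x₀ : ℝ) : ℂ)) := by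
      rw [tendsto_nhdsWithin_iff]
      refine ⟨(Complex.continuous_ofReal.tendsto x₀).mono_left nhdsWithin_le_nhds, ?_⟩
      filter_upwards [self_mem_nhdsWithin] with t ht h
      rw [Set.mem_singleton_iff] at h
      exact ht (Set.mem_singleton_iff.mpr (by exact_mod_cast h))
    have hev : ∀ᶠ t : ℝ in 𝓝[≠] x₀, gfun f K ↑t = Lmap K (f z₀) := by
      have hopen' : IsOpen {t : ℝ | emb t ∈ Ω} := hopen.preimage hembc
      have hevΩ : ∀ᶠ t : ℝ in 𝓝 x₀, emb t ∈ Ω := hopen'.eventually_mem hx₀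
      filter_upwards [nhdsWithin_le_nhds hevΩ] with t ht
      show Lmap K (f (pt K (((t : ℝ) : ℂ).re, ((t : ℝ) : ℂ).im))) = _
      simp only [Complex.ofReal_re, Complex.ofReal_im]
      rw [pt_real, hreal t ht]
    have hfreq : ∃ᶠ c in 𝓝[≠] ((x₀ : ℝ) : ℂ), gfun f K c = Lmap K (f z₀) :=
      htR.frequently hev.frequently
    have hEqK : EqOn (gfun f K) (fun _ => Lmap K (f z₀)) (Uset Ω K) :=
      (hanal K hK).eqOn_of_preconnected_of_frequently_eq analyticOnNhd_const
        (isPreconnected_Uset K (hsliceconn K hK)) hx₀U hfreq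
    have hpU : (⟨p.1, p.2⟩ : ℂ) ∈ Uset Ω K := hp
    exact Lmap_inj (hEqK hpU)
  have hall : ∀ y ∈ Ω, f y = f z₀ := by
    intro y hy
    by_cases him : im' y = 0
    · have hye : y = emb (re' y) := by
        have h := him
        rw [Octo.im', sub_eq_zero] at h
        exact h
      rw [hye]
      exact hreal _ (hye ▸ hy)
    · have hre0 : re' (im' y) = 0 := by rw [Octo.im', re'_sub, re'_emb, sub_self]
      have hs : 0 < norm' (im' y) := norm'_pos him
      set K := (norm' (im' y))⁻¹ • im' y with hKdef
      have hKim : IsImUnit K := by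
        apply isImUnit_of
        · rw [hKdef, re'_smul, hre0, mul_zero]
        · rw [hKdef, inner'_smul, ← norm'_sq]
          field_simp
      have hyK : y = pt K (re' y, norm' (im' y)) := by
        rw [Octo.pt, hKdef, smul_smul, mul_inv_cancel₀ (ne_of_gt hs), one_smul, Octo.im']
        abel
      rw [hyK]
      exact hfK K hKim _ (by rw [← hyK]; exact hy)
  intro z hz w hw
  rw [hall z hz, hall w hw]
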